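/- arXiv:1309.3810 — 2 statements merged into one kernel-verified Lean document; each statement's English description precedes it below -/
import Mathlib

section
/- Let c > 0, 0 < η < 1, A > 0 be real numbers and λ₁, λ₂ > 0. Suppose c + ((1+η)/c)·(1/λ₁² + 1/λ₂²) − 2·(1/λ₁ + 1/λ₂) ≤ 2/A and 2/A ≤ η·c·(1−η)/(1+η). Then for i = 1, 2 one has λᵢ ≤ (1+η)/(c·(1 − √(1−η²))). -/
set_option maxHeartbeats 1000000 in
lemma aux_stmt_10 (c η lam other : ℝ) (hc : 0 < c) (hη0 : 0 < η) (hη1 : η < 1)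
    (hlam : 0 < lam) (hother : 0 < other)
    (h3 : c + ((1 + η) / c) * (1 / lam ^ 2 + 1 / other ^ 2) -
        2 * (1 / lam + 1 / other) ≤ η * c * (1 - η) / (1 + η)) :
    lam ≤ (1 + η) / (c * (1 - Real.sqrt (1 - η ^ 2))) := by
  have hη2 : (0:ℝ) ≤ 1 - η ^ 2 := by nlinarith
  have hs : Real.sqrt (1 - η ^ 2) ^ 2 = 1 - η ^ 2 := Real.sq_sqrt hη2
  set s := Real.sqrt (1 - η ^ 2) with hs_def
  have hs0 : 0 < s := Real.sqrt_pos.mpr (by nlinarith)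
  have hs1 : s < 1 := by nlinarith
  have hη : (0:ℝ) < 1 + η := by linarith
  obtain ⟨x, hx_def⟩ : ∃ x, x = 1 / lam := ⟨_, rfl⟩
  obtain ⟨y, hy_def⟩ : ∃ y, y = 1 / other := ⟨_, rfl⟩
  have hx2 : 1 / lam ^ 2 = x ^ 2 := by rw [hx_def]; ring
  have hy2 : 1 / other ^ 2 = y ^ 2 := by rw [hy_def]; ring
  rw [hx2, hy2, ← hx_def, ← hy_def] at h3
  have hx : 0 < x := by rw [hx_def]; positivity
  have hy : 0 < y := by rw [hy_def]; positivity
  have hkey : (c + ((1 + η) / c) * (x ^ 2 + y ^ 2) - 2 * (x + y)) * (c * (1 + η))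
      ≤ (η * c * (1 - η) / (1 + η)) * (c * (1 + η)) :=
    mul_le_mul_of_nonneg_right h3 (by positivity)
  have e1 : (c + ((1 + η) / c) * (x ^ 2 + y ^ 2) - 2 * (x + y)) * (c * (1 + η))
      = c ^ 2 * (1 + η) + (1 + η) ^ 2 * (x ^ 2 + y ^ 2) - 2 * c * (1 + η) * (x + y) := by
    field_simp
  have e2 : (η * c * (1 - η) / (1 + η)) * (c * (1 + η)) = η * c ^ 2 * (1 - η) := by
    field_simp
  have h4 : ((1 + η) * x - c) ^ 2 + ((1 + η) * y - c) ^ 2 ≤ c ^ 2 * (1 - η ^ 2) := by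
    nlinarith [hkey, e1, e2]
  have h5 : ((1 + η) * x - c) ^ 2 ≤ (c * s) ^ 2 := by
    nlinarith [sq_nonneg ((1 + η) * y - c)]
  have h6 : c * (1 - s) ≤ (1 + η) * x := by
    have hb := (abs_le_of_sq_le_sq' h5 (by positivity)).1
    linarith
  have h7 : 0 < c * (1 - s) := mul_pos hc (by linarith)
  rw [le_div_iff₀ h7]
  have hxl : x * lam = 1 := by rw [hx_def]; field_simp
  nlinarith [mul_le_mul_of_nonneg_right h6 (le_of_lt hlam)]

theorem stmt_10 (c η A lam₁ lam₂ : ℝ) (hc : 0 < c) (hη0 : 0 < η) (hη1 : η < 1)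
    (hA : 0 < A) (hlam₁ : 0 < lam₁) (hlam₂ : 0 < lam₂)
    (h1 : c + ((1 + η) / c) * (1 / lam₁ ^ 2 + 1 / lam₂ ^ 2) -
        2 * (1 / lam₁ + 1 / lam₂) ≤ 2 / A)
    (h2 : 2 / A ≤ η * c * (1 - η) / (1 + η)) :
    lam₁ ≤ (1 + η) / (c * (1 - Real.sqrt (1 - η ^ 2))) ∧
      lam₂ ≤ (1 + η) / (c * (1 - Real.sqrt (1 - η ^ 2))) := by
  have h3 := h1.trans h2
  have h3' : c + ((1 + η) / c) * (1 / lam₂ ^ 2 + 1 / lam₁ ^ 2) -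
      2 * (1 / lam₂ + 1 / lam₁) ≤ η * c * (1 - η) / (1 + η) := by linarith
  exact ⟨aux_stmt_10 c η lam₁ lam₂ hc hη0 hη1 hlam₁ hlam₂ h3,
    aux_stmt_10 c η lam₂ lam₁ hc hη0 hη1 hlam₂ hlam₁ h3'⟩
end

section
/- Let X be a 2×2 Hermitian positive definite complex matrix and let c > 0 and 0 < η < 1 be real numbers. If c + ((1+η)/c)·Re(trace(X⁻¹ * X⁻¹)) − 2·Re(trace X⁻¹) ≤ η·c·(1−η)/(1+η), then ((1+η)/(c·(1 − √(1−η²))))•(1 : Matrix) − X is positive semidefinite. -/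
open scoped ComplexOrder
open Matrix

set_option maxHeartbeats 1000000 in
private lemma key_real_stmt11 (a b c η : ℝ) (ha : 0 < a) (hb : 0 < b) (hc : 0 < c)
    (hη0 : 0 < η) (hη1 : η < 1)
    (h : c + ((1 + η) / c) * (a⁻¹^2 + b⁻¹^2) - 2 * (a⁻¹ + b⁻¹) ≤
      η * c * (1 - η) / (1 + η)) :
    a ≤ (1 + η) / (c * (1 - Real.sqrt (1 - η ^ 2))) := by
  set x := a⁻¹ with hxdef
  set y := b⁻¹ with hydef
  set r := Real.sqrt (1 - η ^ 2) with hrdef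
  have hη2 : (0:ℝ) < 1 - η ^ 2 := by nlinarith
  have hr2 : r ^ 2 = 1 - η ^ 2 := Real.sq_sqrt hη2.le
  have hr0 : 0 < r := Real.sqrt_pos.mpr hη2
  have hr1 : r < 1 := by nlinarith [hr2, hr0.le]
  have h1η : (0:ℝ) < 1 + η := by linarith
  have h2 := mul_le_mul_of_nonneg_right h (by positivity : (0:ℝ) ≤ c * (1 + η))
  have e1 : (c + ((1 + η) / c) * (x^2 + y^2) - 2 * (x + y)) * (c * (1 + η)) =
      c^2*(1+η) + (1+η)^2*(x^2+y^2) - 2*c*(1+η)*(x+y) := by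
    field_simp
  have e2 : (η * c * (1 - η) / (1 + η)) * (c * (1 + η)) = η * c^2 * (1 - η) := by
    field_simp
  rw [e1, e2] at h2
  have hp : ((1+η)*x - c)^2 + ((1+η)*y - c)^2 ≤ c^2 * (1 - η^2) := by nlinarith [h2]
  have hxge : c * (1 - r) ≤ (1 + η) * x := by
    nlinarith [sq_nonneg ((1+η)*x - c + c*r), sq_nonneg ((1+η)*y - c), mul_pos hc hr0]
  have hcr : (0:ℝ) < c * (1 - r) := by nlinarith
  have hxa : a * x = 1 := mul_inv_cancel₀ ha.ne'
  rw [le_div_iff₀ hcr]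
  nlinarith [mul_le_mul_of_nonneg_left hxge ha.le]

set_option maxHeartbeats 1000000 in
theorem stmt_11 (X : Matrix (Fin 2) (Fin 2) ℂ) (hX : X.PosDef)
    (c η : ℝ) (hc : 0 < c) (hη0 : 0 < η) (hη1 : η < 1)
    (h : c + ((1 + η) / c) * ((X⁻¹ * X⁻¹).trace).re - 2 * (X⁻¹.trace).re ≤
        η * c * (1 - η) / (1 + η)) :
    ((((1 + η) / (c * (1 - Real.sqrt (1 - η ^ 2))) : ℝ) : ℂ) •
        (1 : Matrix (Fin 2) (Fin 2) ℂ) - X).PosSemidef := by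
  have hH := hX.isHermitian
  set μ : Fin 2 → ℝ := hH.eigenvalues with hμdef
  have hμpos : ∀ i, 0 < μ i := hX.eigenvalues_pos
  set U : Matrix (Fin 2) (Fin 2) ℂ := (hH.eigenvectorUnitary : Matrix (Fin 2) (Fin 2) ℂ)
    with hUdef
  have hU1 : star U * U = 1 := by simp [hUdef]
  have hU2 : U * star U = 1 := by simp [hUdef]
  have hspec : X = U * diagonal (RCLike.ofReal ∘ μ) * star U := hH.spectral_theorem
  set E : Matrix (Fin 2) (Fin 2) ℂ := diagonal (RCLike.ofReal ∘ fun i => (μ i)⁻¹) with hEdef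
  have hXinv : X⁻¹ = U * E * star U := by
    refine inv_eq_right_inv ?_
    rw [hspec]
    have : diagonal (RCLike.ofReal ∘ μ) * E = 1 := by
      rw [hEdef, diagonal_mul_diagonal]
      convert diagonal_one with i
      simp only [Function.comp]
      rw [← RCLike.ofReal_mul, mul_inv_cancel₀ (hμpos i).ne', RCLike.ofReal_one]
    calc U * diagonal (RCLike.ofReal ∘ μ) * star U * (U * E * star U)
        = U * (diagonal (RCLike.ofReal ∘ μ) * (star U * U) * E) * star U := by
          noncomm_ring
      _ = 1 := by rw [hU1, mul_one, this, mul_one, hU2]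
  have htr1 : (X⁻¹.trace).re = (μ 0)⁻¹ + (μ 1)⁻¹ := by
    rw [hXinv, trace_mul_cycle, hU1, one_mul, hEdef, trace_diagonal]
    simp [Fin.sum_univ_two]
  have htr2 : ((X⁻¹ * X⁻¹).trace).re = ((μ 0)⁻¹)^2 + ((μ 1)⁻¹)^2 := by
    have : X⁻¹ * X⁻¹ = U * (E * E) * star U := by
      rw [hXinv]
      calc U * E * star U * (U * E * star U)
          = U * (E * (star U * U) * E) * star U := by noncomm_ring
        _ = U * (E * E) * star U := by rw [hU1, mul_one]
    rw [this, trace_mul_cycle, hU1, one_mul, hEdef, diagonal_mul_diagonal, trace_diagonal]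
    simp [Fin.sum_univ_two]
    ring
  rw [htr1, htr2] at h
  set K : ℝ := (1 + η) / (c * (1 - Real.sqrt (1 - η ^ 2))) with hKdef
  have hb0 : μ 0 ≤ K := key_real_stmt11 (μ 0) (μ 1) c η (hμpos 0) (hμpos 1) hc hη0 hη1 h
  have hb1 : μ 1 ≤ K := key_real_stmt11 (μ 1) (μ 0) c η (hμpos 1) (hμpos 0) hc hη0 hη1
    (by linarith)
  have hdiag : diagonal (RCLike.ofReal ∘ fun i => K - μ i) =
      (K : ℂ) • (1 : Matrix (Fin 2) (Fin 2) ℂ) - diagonal (RCLike.ofReal ∘ μ) := by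
    ext i j
    by_cases hij : i = j <;>
      simp [hij, diagonal_apply, Matrix.one_apply, Complex.ofReal_sub]
  have hM : (K : ℂ) • (1 : Matrix (Fin 2) (Fin 2) ℂ) - X =
      U * diagonal (RCLike.ofReal ∘ fun i => K - μ i) * star U := by
    rw [hdiag]
    rw [Matrix.mul_sub]
    rw [Matrix.sub_mul]
    rw [mul_smul_comm (K : ℂ) U (1 : Matrix (Fin 2) (Fin 2) ℂ)]
    rw [mul_one]
    rw [smul_mul_assoc (K : ℂ) U (star U)]
    rw [hU2]
    rw [← hspec]
  rw [hM]
  have hpsd : (diagonal (RCLike.ofReal ∘ fun i => K - μ i) :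
      Matrix (Fin 2) (Fin 2) ℂ).PosSemidef := by
    refine posSemidef_diagonal_iff.mpr fun i => ?_
    have : (0:ℝ) ≤ K - μ i := by fin_cases i <;> simp <;> linarith
    simpa using this
  exact hpsd.mul_mul_conjTranspose_same U
end
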